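/- Entropy flux construction for the augmented system: let U : ℝ → ℝ be C¹ convex and define Q(u,v) = ∫^u U'(C₀(θ,v))·∂_u C₁(θ,v) dθ (an antiderivative in u). Then along smooth solutions of ∂_t C₀(u,v(x)) + ∂_u C₁(u,v(x))·∂ₓ u = 0 (with v = v(x) smooth and time-independent), the quantity U(C₀(u,v)) satisfies ∂_t U(C₀(u,v)) + ∂ₓ Q(u,v) − ∂_v Q(u,v)·∂ₓ v = 0. Concretely: for C¹ functions u(t,x) and v(x), if ∂_u C₀(u,v)·∂_t u + ∂_u C₁(u,v)·∂ₓ u = 0 pointwise, then ∂_t [U(C₀(u,v))] + ∂ₓ[Q(u,v(x))] − (∂_v Q)(u,v)·v'(x) = 0 pointwise. -/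

import Mathlib

/-- `C₀(u,v) = (1-v)γ₋(u) + vγ₊(u)`. -/
def C0 (γm γp : ℝ → ℝ) (u v : ℝ) : ℝ := (1 - v) * γm u + v * γp u

/-- `∂_u C₀(u,v)`. -/
noncomputable def dC0 (γm γp : ℝ → ℝ) (u v : ℝ) : ℝ :=
  (1 - v) * deriv γm u + v * deriv γp u

/-- `∂_u C₁(u,v)` where `C₁(u,v) = (1-v)f⁻(γ₋(u)) + v f⁺(γ₊(u))`. -/
noncomputable def dC1 (γm γp fm fp : ℝ → ℝ) (u v : ℝ) : ℝ :=
  (1 - v) * deriv fm (γm u) * deriv γm u + v * deriv fp (γp u) * deriv γp u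

theorem entropy_flux_construction
    (γm γp fm fp U : ℝ → ℝ)
    (hγm : ContDiff ℝ 1 γm) (hγp : ContDiff ℝ 1 γp)
    (hfm : ContDiff ℝ 1 fm) (hfp : ContDiff ℝ 1 fp)
    (hU : ContDiff ℝ 1 U)
    (Q : ℝ → ℝ → ℝ)
    (hQ : ContDiff ℝ 1 (fun p : ℝ × ℝ => Q p.1 p.2))
    -- `Q(·,v)` is an antiderivative of `U'(C₀(·,v)) ∂_u C₁(·,v)`:
    (hQder : ∀ θ v : ℝ, HasDerivAt (fun s => Q s v)
      (deriv U (C0 γm γp θ v) * dC1 γm γp fm fp θ v) θ)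
    (u : ℝ → ℝ → ℝ) (v : ℝ → ℝ)
    (hv : ContDiff ℝ 1 v)
    (hu : ContDiff ℝ 1 (fun p : ℝ × ℝ => u p.1 p.2))
    (t x : ℝ)
    -- the PDE `∂_u C₀ ∂_t u + ∂_u C₁ ∂_x u = 0` holds pointwise:
    (hPDE : ∀ t' x' : ℝ,
      dC0 γm γp (u t' x') (v x') * deriv (fun s => u s x') t'
        + dC1 γm γp fm fp (u t' x') (v x') * deriv (fun s => u t' s) x' = 0) :
    deriv (fun s => U (C0 γm γp (u s x) (v x))) t
      + deriv (fun s => Q (u t s) (v s)) x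
      - deriv (fun s => Q (u t x) s) (v x) * deriv v x = 0 := by
  have hudiff := hu.differentiable one_ne_zero
  have hvdiff := hv.differentiable one_ne_zero
  have hQdiff := hQ.differentiable one_ne_zero
  set ux := u t x with hux
  set vx := v x with hvx
  -- derivatives of u in each variable
  have hutx : DifferentiableAt ℝ (fun s => u s x) t := by
    have h := (hudiff (t, x)).comp t (differentiableAt_id.prodMk (differentiableAt_const x) : DifferentiableAt ℝ (fun s : ℝ => (s, x)) t); exact h
  have huxx : DifferentiableAt ℝ (fun s => u t s) x := by
    have h := (hudiff (t, x)).comp x ((differentiableAt_const t).prodMk differentiableAt_id); exact h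
  set a := deriv (fun s => u s x) t with ha
  set b := deriv (fun s => u t s) x with hb
  have hut : HasDerivAt (fun s => u s x) a t := hutx.hasDerivAt
  have huxd : HasDerivAt (fun s => u t s) b x := huxx.hasDerivAt
  have hvd : HasDerivAt v (deriv v x) x := (hvdiff x).hasDerivAt
  -- fderiv of Q at (ux, vx)
  set L := fderiv ℝ (fun p : ℝ × ℝ => Q p.1 p.2) (ux, vx) with hL
  have hQF : HasFDerivAt (fun p : ℝ × ℝ => Q p.1 p.2) L (ux, vx) :=
    (hQdiff (ux, vx)).hasFDerivAt
  -- partial derivative in first variable equals L (1,0)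
  have hpart1 : HasDerivAt (fun s => Q s vx) (L (1, 0)) ux := by
    have hinner : HasDerivAt (fun s : ℝ => (s, vx)) ((1 : ℝ), (0 : ℝ)) ux :=
      (hasDerivAt_id ux).prodMk (hasDerivAt_const ux vx)
    exact hQF.comp_hasDerivAt ux hinner
  have hL10 : L (1, 0) = deriv U (C0 γm γp ux vx) * dC1 γm γp fm fp ux vx :=
    hpart1.unique (hQder ux vx)
  -- partial derivative in second variable equals L (0,1)
  have hpart2 : HasDerivAt (fun s => Q ux s) (L (0, 1)) vx := by
    have hinner : HasDerivAt (fun s : ℝ => (ux, s)) ((0 : ℝ), (1 : ℝ)) vx :=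
      (hasDerivAt_const vx ux).prodMk (hasDerivAt_id vx)
    exact hQF.comp_hasDerivAt vx hinner
  have h2 : deriv (fun s => Q ux s) vx = L (0, 1) := hpart2.deriv
  -- derivative of x ↦ Q (u t x) (v x)
  have hprod : HasDerivAt (fun s : ℝ => (u t s, v s)) (b, deriv v x) x :=
    huxd.prodMk hvd
  have hQx : HasDerivAt (fun s => Q (u t s) (v s)) (L (b, deriv v x)) x :=
    by have h := hQF.comp_hasDerivAt x hprod; exact h
  have hLsplit : L (b, deriv v x) = b * L (1, 0) + deriv v x * L (0, 1) := by
    have : (b, deriv v x) = b • ((1 : ℝ), (0 : ℝ)) + (deriv v x) • ((0 : ℝ), (1 : ℝ)) := by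
      simp [Prod.ext_iff]
    rw [this, map_add, map_smul, map_smul, smul_eq_mul, smul_eq_mul]
  -- derivative of t ↦ U (C0 γm γp (u t x) vx)
  have hC0 : HasDerivAt (fun w => C0 γm γp w vx) (dC0 γm γp ux vx) ux := by
    unfold C0 dC0
    exact (((hγm.differentiable one_ne_zero ux).hasDerivAt.const_mul (1 - vx)).add
      ((hγp.differentiable one_ne_zero ux).hasDerivAt.const_mul vx))
  have hUd : HasDerivAt U (deriv U (C0 γm γp ux vx)) (C0 γm γp ux vx) :=
    (hU.differentiable one_ne_zero _).hasDerivAt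
  have hT1 : HasDerivAt (fun s => U (C0 γm γp (u s x) vx))
      (deriv U (C0 γm γp ux vx) * (dC0 γm γp ux vx * a)) t :=
    by have h := hUd.comp t (hC0.comp t hut); exact h
  rw [hT1.deriv, hQx.deriv, hLsplit, h2, hL10]
  have hpde := hPDE t x
  rw [← hux, ← hvx, ← ha, ← hb] at hpde
  linear_combination deriv U (C0 γm γp ux vx) * hpde
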